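/- Let p ∈ [1,∞] be fixed and let 𝒞 be a compact set of n×n stochastic matrices each of which satisfies ⟨M⟩_p < 1 for the induced consensus seminorm, and set λ = max_{M ∈ 𝒞} ⟨M⟩_p. Then for every infinite sequence M₁, M₂, … of matrices from 𝒞, the product M_i M_{i−1} ⋯ M₁ converges as i → ∞ to a rank-one matrix of the form 𝟏c for some row vector c, and convergence occurs as fast as λ^i converges to zero: there is a constant K such that ‖M_i M_{i−1} ⋯ M₁ − 𝟏c‖ ≤ K·λ^i for all i ≥ 1. -/

import Mathlib

open Matrix Finset
open scoped ENNReal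

noncomputable def matPNorm (p : ℝ≥0∞) [Fact (1 ≤ p)] {n m : ℕ}
    (M : Matrix (Fin n) (Fin m) ℝ) : ℝ :=
  ‖LinearMap.toContinuousLinearMap
    (Matrix.toLin (PiLp.basisFun p ℝ (Fin m)) (PiLp.basisFun p ℝ (Fin n)) M)‖

noncomputable def metricSN (p : ℝ≥0∞) [Fact (1 ≤ p)] {n m : ℕ}
    (M : Matrix (Fin n) (Fin m) ℝ) : ℝ :=
  ⨅ c : Fin m → ℝ, matPNorm p (M - Matrix.of fun _ j => c j)

noncomputable def vecSN (p : ℝ≥0∞) [Fact (1 ≤ p)] {m : ℕ} (x : Fin m → ℝ) : ℝ :=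
  ⨅ c : ℝ, ‖(WithLp.equiv p (Fin m → ℝ)).symm (x - fun _ => c)‖

noncomputable def inducedSN (p : ℝ≥0∞) [Fact (1 ≤ p)] {n m : ℕ}
    (M : Matrix (Fin n) (Fin m) ℝ) : ℝ :=
  sSup {r | ∃ x : Fin m → ℝ, vecSN p x = 1 ∧ r = vecSN p (M.mulVec x)}

noncomputable def coeErg {n : ℕ} (M : Matrix (Fin n) (Fin n) ℝ) : ℝ :=
  (1 / 2) * ⨆ i : Fin n, ⨆ j : Fin n, ∑ k, |M i k - M j k|

def IsStochastic {n : ℕ} (S : Matrix (Fin n) (Fin n) ℝ) : Prop :=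
  (∀ i j, 0 ≤ S i j) ∧ ∀ i, ∑ j, S i j = 1

def IsScrambling {n : ℕ} (S : Matrix (Fin n) (Fin n) ℝ) : Prop :=
  IsStochastic S ∧ ∀ i j, ∃ k, 0 < S i k ∧ 0 < S j k

def EqRowSum (n m : ℕ) : Submodule ℝ (Matrix (Fin n) (Fin m) ℝ) where
  carrier := {M | ∀ i i', ∑ j, M i j = ∑ j, M i' j}
  add_mem' := by
    intro A B hA hB i i'
    simp only [Matrix.add_apply, Finset.sum_add_distrib, hA i i', hB i i']
  zero_mem' := by intro i i'; simp
  smul_mem' := by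
    intro c A hA i i'
    simp only [Matrix.smul_apply, smul_eq_mul, ← Finset.mul_sum, hA i i']

noncomputable def prodSeq {n : ℕ} (M : ℕ → Matrix (Fin n) (Fin n) ℝ) :
    ℕ → Matrix (Fin n) (Fin n) ℝ
  | 0 => 1
  | (i + 1) => M i * prodSeq M i

section Helpers
variable (p : ℝ≥0∞) [Fact (1 ≤ p)] {n m : ℕ}

/-- the matrix-to-CLM linear equivalence -/
noncomputable def matE (p : ℝ≥0∞) [Fact (1 ≤ p)] (n m : ℕ) :
    Matrix (Fin n) (Fin m) ℝ ≃ₗ[ℝ]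
      (PiLp p (fun _ : Fin m => ℝ) →L[ℝ] PiLp p (fun _ : Fin n => ℝ)) :=
  (Matrix.toLin (PiLp.basisFun p ℝ (Fin m)) (PiLp.basisFun p ℝ (Fin n))).trans
    LinearMap.toContinuousLinearMap

lemma matPNorm_eq (M : Matrix (Fin n) (Fin m) ℝ) : matPNorm p M = ‖matE p n m M‖ := rfl

lemma matE_apply (M : Matrix (Fin n) (Fin m) ℝ) (v : PiLp p (fun _ : Fin m => ℝ)) :
    matE p n m M v
      = (WithLp.equiv p (Fin n → ℝ)).symm (M.mulVec (WithLp.equiv p (Fin m → ℝ) v)) := by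
  show (Matrix.toLin (PiLp.basisFun p ℝ (Fin m)) (PiLp.basisFun p ℝ (Fin n)) M) v = _
  ext i
  have hs : ∀ (s : Finset (Fin n)) (f : Fin n → PiLp p (fun _ : Fin n => ℝ)),
      (∑ x ∈ s, f x) i = ∑ x ∈ s, f x i := fun s f => by rw [WithLp.ofLp_sum, Finset.sum_apply]
  simp only [Matrix.toLin_apply, PiLp.basisFun_apply, hs]
  have h1 : ∀ (c : ℝ) (x : Fin n),
      (c • (WithLp.equiv p (Fin n → ℝ)).symm (Pi.single x 1)) i
        = c * ((Pi.single x 1 : Fin n → ℝ) i) := fun _ _ => rfl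
  have h2 : ∀ x, ((PiLp.basisFun p ℝ (Fin m)).repr v) x = v x := fun _ => rfl
  have h3 : (WithLp.equiv p (Fin n → ℝ)).symm (M *ᵥ (WithLp.equiv p (Fin m → ℝ)) v) i
      = (M *ᵥ (fun j => v j)) i := rfl
  simp only [h1, h2, h3, Pi.single_apply, mul_ite, mul_one, mul_zero, Finset.sum_ite_eq',
    Finset.sum_ite_eq, Finset.mem_univ, if_true, mulVec, dotProduct]
  simp [PiLp.single_apply, mul_ite]

lemma matPNorm_nonneg (M : Matrix (Fin n) (Fin m) ℝ) : 0 ≤ matPNorm p M := by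
  rw [matPNorm_eq]; exact norm_nonneg _

lemma mulVec_norm_le (M : Matrix (Fin n) (Fin m) ℝ) (v : Fin m → ℝ) :
    ‖(WithLp.equiv p (Fin n → ℝ)).symm (M.mulVec v)‖
      ≤ matPNorm p M * ‖(WithLp.equiv p (Fin m → ℝ)).symm v‖ := by
  have := (matE p n m M).le_opNorm ((WithLp.equiv p (Fin m → ℝ)).symm v)
  rwa [matE_apply, Equiv.apply_symm_apply, ← matPNorm_eq] at this

lemma vecSN_nonneg (x : Fin m → ℝ) : 0 ≤ vecSN p x :=
  Real.iInf_nonneg fun _ => norm_nonneg _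

lemma vecSN_bddBelow (x : Fin m → ℝ) :
    BddBelow (Set.range fun c : ℝ => ‖(WithLp.equiv p (Fin m → ℝ)).symm (x - fun _ => c)‖) :=
  ⟨0, by rintro r ⟨c, rfl⟩; exact norm_nonneg _⟩

lemma vecSN_le (x : Fin m → ℝ) (c : ℝ) :
    vecSN p x ≤ ‖(WithLp.equiv p (Fin m → ℝ)).symm (x - fun _ => c)‖ :=
  ciInf_le (vecSN_bddBelow p x) c

lemma vecSN_le_norm (x : Fin m → ℝ) :
    vecSN p x ≤ ‖(WithLp.equiv p (Fin m → ℝ)).symm x‖ := by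
  have h : (x - fun _ => (0:ℝ)) = x := by funext i; simp
  have := vecSN_le p x 0
  rwa [h] at this

lemma le_mul_vecSN {r a : ℝ} (ha : 0 ≤ a) (x : Fin m → ℝ)
    (h : ∀ c : ℝ, r ≤ a * ‖(WithLp.equiv p (Fin m → ℝ)).symm (x - fun _ => c)‖) :
    r ≤ a * vecSN p x := by
  rcases eq_or_lt_of_le ha with h0 | h0
  · have := h 0
    rw [← h0] at this ⊢
    simpa using this
  · rw [← div_le_iff₀' h0]
    refine le_ciInf fun c => ?_
    rw [div_le_iff₀' h0]
    exact h c

lemma vecSN_smul_le {t : ℝ} (ht : 0 < t) (x : Fin m → ℝ) :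
    vecSN p (t • x) ≤ t * vecSN p x := by
  refine le_mul_vecSN p ht.le x fun c => ?_
  have he : ((t • x) - fun _ => t * c) = t • (x - fun _ => c) := by
    funext i; simp [mul_sub]
  calc vecSN p (t • x) ≤ ‖(WithLp.equiv p (Fin m → ℝ)).symm ((t • x) - fun _ => t * c)‖ :=
        vecSN_le p _ _
    _ = t * ‖(WithLp.equiv p (Fin m → ℝ)).symm (x - fun _ => c)‖ := by
        rw [he]
        rw [show (WithLp.equiv p (Fin m → ℝ)).symm (t • (x - fun _ => c))
            = t • (WithLp.equiv p (Fin m → ℝ)).symm (x - fun _ => c) from rfl]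
        rw [norm_smul, Real.norm_eq_abs, abs_of_pos ht]

lemma vecSN_smul {t : ℝ} (ht : 0 < t) (x : Fin m → ℝ) :
    vecSN p (t • x) = t * vecSN p x := by
  refine le_antisymm (vecSN_smul_le p ht x) ?_
  have := vecSN_smul_le p (inv_pos.mpr ht) (t • x)
  rw [inv_smul_smul₀ ht.ne'] at this
  calc t * vecSN p x ≤ t * (t⁻¹ * vecSN p (t • x)) := by
        exact mul_le_mul_of_nonneg_left this ht.le
    _ = vecSN p (t • x) := by field_simp

lemma rowsum_mulVec_sub {r : ℝ} (A : Matrix (Fin n) (Fin m) ℝ) (hA : ∀ i, ∑ j, A i j = r)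
    (x : Fin m → ℝ) (c : ℝ) :
    A.mulVec (x - fun _ => c) = A.mulVec x - fun _ => c * r := by
  funext i
  simp only [mulVec, dotProduct, Pi.sub_apply]
  rw [show (∑ j, A i j * (x j - c)) = (∑ j, A i j * x j) - c * ∑ j, A i j by
    rw [Finset.mul_sum]; rw [← Finset.sum_sub_distrib]; congr 1; funext j; ring, hA i]

lemma vecSN_mulVec_le {r : ℝ} (A : Matrix (Fin n) (Fin m) ℝ) (hA : ∀ i, ∑ j, A i j = r)
    (x : Fin m → ℝ) : vecSN p (A.mulVec x) ≤ matPNorm p A * vecSN p x := by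
  refine le_mul_vecSN p (matPNorm_nonneg p A) x fun c => ?_
  calc vecSN p (A.mulVec x)
      ≤ ‖(WithLp.equiv p (Fin n → ℝ)).symm (A.mulVec x - fun _ => c * r)‖ := vecSN_le p _ _
    _ = ‖(WithLp.equiv p (Fin n → ℝ)).symm (A.mulVec (x - fun _ => c))‖ := by
        rw [rowsum_mulVec_sub A hA]
    _ ≤ matPNorm p A * ‖(WithLp.equiv p (Fin m → ℝ)).symm (x - fun _ => c)‖ :=
        mulVec_norm_le p A _

lemma vecSN_add_le (x y : Fin m → ℝ) : vecSN p (x + y) ≤ vecSN p x + vecSN p y := by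
  refine le_ciInf_add_ciInf fun c c' => ?_
  calc vecSN p (x + y) ≤ ‖(WithLp.equiv p (Fin m → ℝ)).symm ((x + y) - fun _ => c + c')‖ :=
        vecSN_le p _ _
    _ ≤ _ := by
        have he : ((x + y) - fun _ => c + c') = (x - fun _ => c) + (y - fun _ => c') := by
          funext i; simp; ring
        rw [he]
        rw [show (WithLp.equiv p (Fin m → ℝ)).symm ((x - fun _ => c) + (y - fun _ => c'))
            = (WithLp.equiv p (Fin m → ℝ)).symm (x - fun _ => c)
              + (WithLp.equiv p (Fin m → ℝ)).symm (y - fun _ => c') from rfl]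
        exact norm_add_le _ _

lemma inducedSN_bddAbove (M : Matrix (Fin n) (Fin m) ℝ) (hM : ∀ i, ∑ j, M i j = 1) :
    BddAbove {r | ∃ x : Fin m → ℝ, vecSN p x = 1 ∧ r = vecSN p (M.mulVec x)} := by
  refine ⟨matPNorm p M, ?_⟩
  rintro r ⟨x, hx, rfl⟩
  have := vecSN_mulVec_le p M hM x
  rwa [hx, mul_one] at this

lemma inducedSN_nonneg (M : Matrix (Fin n) (Fin m) ℝ) (hM : ∀ i, ∑ j, M i j = 1) :
    0 ≤ inducedSN p M := by
  by_cases hS : {r | ∃ x : Fin m → ℝ, vecSN p x = 1 ∧ r = vecSN p (M.mulVec x)}.Nonempty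
  · obtain ⟨r, hr⟩ := hS
    obtain ⟨x, hx, hrx⟩ := hr
    refine le_trans ?_ (le_csSup (inducedSN_bddAbove p M hM) ⟨x, hx, hrx⟩)
    rw [hrx]; exact vecSN_nonneg p _
  · rw [Set.not_nonempty_iff_eq_empty] at hS
    unfold inducedSN
    rw [hS, Real.sSup_empty]

lemma vecSN_mulVec_le_inducedSN (M : Matrix (Fin n) (Fin m) ℝ) (hM : ∀ i, ∑ j, M i j = 1)
    (x : Fin m → ℝ) : vecSN p (M.mulVec x) ≤ inducedSN p M * vecSN p x := by
  rcases eq_or_lt_of_le (vecSN_nonneg p x) with h0 | h0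
  · have h1 := vecSN_mulVec_le p M hM x
    rw [← h0] at h1 ⊢
    simpa using h1
  · set s := vecSN p x with hs
    set y := s⁻¹ • x with hy
    have hx : x = s • y := by rw [hy, smul_inv_smul₀ h0.ne']
    have hy1 : vecSN p y = 1 := by
      rw [hy, vecSN_smul p (inv_pos.mpr h0)]
      field_simp
      exact hs.symm
    have hmem : vecSN p (M.mulVec y) ≤ inducedSN p M :=
      le_csSup (inducedSN_bddAbove p M hM) ⟨y, hy1, rfl⟩
    calc vecSN p (M.mulVec x) = vecSN p (s • M.mulVec y) := by rw [hx, Matrix.mulVec_smul]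
      _ = s * vecSN p (M.mulVec y) := vecSN_smul p h0 _
      _ ≤ s * inducedSN p M := mul_le_mul_of_nonneg_left hmem h0.le
      _ = inducedSN p M * s := mul_comm _ _

lemma matPNorm_continuous : Continuous fun M : Matrix (Fin n) (Fin m) ℝ => matPNorm p M := by
  have h1 : Continuous fun M : Matrix (Fin n) (Fin m) ℝ => matE p n m M :=
    LinearMap.continuous_of_finiteDimensional (matE p n m).toLinearMap
  exact continuous_norm.comp h1

lemma matPNorm_zero : matPNorm p (0 : Matrix (Fin n) (Fin m) ℝ) = 0 := by
  rw [matPNorm_eq, map_zero, norm_zero]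

lemma matPNorm_le_sum_entries (A : Matrix (Fin n) (Fin m) ℝ) :
    matPNorm p A ≤ ∑ k : Fin n, ∑ j : Fin m,
      |A k j| * matPNorm p (Matrix.single k j 1) := by
  classical
  conv_lhs => rw [matrix_eq_sum_single A]
  rw [matPNorm_eq, map_sum]
  refine le_trans (norm_sum_le _ _) (Finset.sum_le_sum fun k _ => ?_)
  rw [map_sum]
  refine le_trans (norm_sum_le _ _) (Finset.sum_le_sum fun j _ => ?_)
  have : Matrix.single k j (A k j) = (A k j) • Matrix.single k j 1 := by
    ext a b
    simp [Matrix.single, Matrix.smul_apply]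
  rw [this, _root_.map_smul,
    norm_smul (A k j) ((matE p n m) (Matrix.single k j 1)), Real.norm_eq_abs, matPNorm_eq]

lemma inducedSN_lipschitz (M M' : Matrix (Fin n) (Fin m) ℝ)
    (hM : ∀ i, ∑ j, M i j = 1) (hM' : ∀ i, ∑ j, M' i j = 1) :
    inducedSN p M ≤ inducedSN p M' + matPNorm p (M - M') := by
  refine Real.sSup_le ?_ (add_nonneg (inducedSN_nonneg p M' hM') (matPNorm_nonneg p _))
  rintro r ⟨x, hx, rfl⟩
  have hsplit : M.mulVec x = M'.mulVec x + (M - M').mulVec x := by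
    rw [Matrix.sub_mulVec]; abel
  have hzero : ∀ i, ∑ j, (M - M') i j = 0 := fun i => by
    simp [Matrix.sub_apply, Finset.sum_sub_distrib, hM i, hM' i]
  calc vecSN p (M.mulVec x)
      ≤ vecSN p (M'.mulVec x) + vecSN p ((M - M').mulVec x) := by
        rw [hsplit]; exact vecSN_add_le p _ _
    _ ≤ inducedSN p M' * vecSN p x + matPNorm p (M - M') * vecSN p x :=
        add_le_add (vecSN_mulVec_le_inducedSN p M' hM' x) (vecSN_mulVec_le p _ hzero x)
    _ = inducedSN p M' + matPNorm p (M - M') := by rw [hx, mul_one, mul_one]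

lemma inducedSN_continuousOn :
    ContinuousOn (fun M : Matrix (Fin n) (Fin m) ℝ => inducedSN p M)
      {M | ∀ i, ∑ j, M i j = 1} := by
  intro M' hM'
  rw [ContinuousWithinAt, tendsto_iff_dist_tendsto_zero]
  have hb : Filter.Tendsto (fun M : Matrix (Fin n) (Fin m) ℝ => matPNorm p (M - M'))
      (nhdsWithin M' {M | ∀ i, ∑ j, M i j = 1}) (nhds 0) := by
    have hc : Continuous fun M : Matrix (Fin n) (Fin m) ℝ => matPNorm p (M - M') :=
      (matPNorm_continuous p).comp (continuous_id.sub continuous_const)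
    have := hc.continuousWithinAt (s := {M | ∀ i, ∑ j, M i j = 1}) (x := M')
    rwa [ContinuousWithinAt, sub_self, matPNorm_zero] at this
  refine squeeze_zero' (Filter.Eventually.of_forall fun _ => dist_nonneg) ?_ hb
  filter_upwards [self_mem_nhdsWithin] with M hM
  rw [Real.dist_eq, abs_sub_le_iff]
  constructor
  · have := inducedSN_lipschitz p M M' hM hM'
    linarith
  · have := inducedSN_lipschitz p M' M hM' hM
    have he : matPNorm p (M' - M) = matPNorm p (M - M') := by
      rw [show M' - M = (-1 : ℝ) • (M - M') by simp, matPNorm_eq, _root_.map_smul,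
        norm_smul ((-1:ℝ)) ((matE p n m) (M - M')), ← matPNorm_eq]
      simp
    linarith

lemma abs_coord_le_norm (x : Fin m → ℝ) (i : Fin m) :
    |x i| ≤ ‖(WithLp.equiv p (Fin m → ℝ)).symm x‖ := by
  rcases eq_or_ne p ⊤ with hp | hp
  · subst hp
    rw [show ‖(WithLp.equiv ⊤ (Fin m → ℝ)).symm x‖ = ⨆ k, ‖((WithLp.equiv ⊤ (Fin m → ℝ)).symm x) k‖
      from PiLp.norm_eq_ciSup _]
    have : |x i| = ‖((WithLp.equiv ⊤ (Fin m → ℝ)).symm x) i‖ := rfl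
    rw [this]
    exact le_ciSup (f := fun k => ‖((WithLp.equiv ⊤ (Fin m → ℝ)).symm x) k‖)
      (Set.Finite.bddAbove (Set.finite_range _)) i
  · have hq : 0 < p.toReal :=
      ENNReal.toReal_pos (by
        intro h0
        have := (Fact.out : (1:ℝ≥0∞) ≤ p)
        simp [h0] at this) hp
    rw [PiLp.norm_eq_sum hq]
    have h1 : |x i| = ((|x i|) ^ p.toReal) ^ (1 / p.toReal) := by
      rw [← Real.rpow_mul (abs_nonneg _), mul_one_div_cancel hq.ne', Real.rpow_one]
    rw [h1]
    refine Real.rpow_le_rpow (Real.rpow_nonneg (abs_nonneg _) _) ?_ (one_div_nonneg.mpr hq.le)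
    have h2 : (|x i|) ^ p.toReal = ‖((WithLp.equiv p (Fin m → ℝ)).symm x) i‖ ^ p.toReal := rfl
    rw [h2]
    exact Finset.single_le_sum
      (fun k _ => Real.rpow_nonneg (norm_nonneg _) _) (Finset.mem_univ i)

lemma isStochastic_one : IsStochastic (1 : Matrix (Fin n) (Fin n) ℝ) := by
  constructor
  · intro i j
    by_cases h : i = j <;> simp [Matrix.one_apply, h]
  · intro i
    simp [Matrix.one_apply]

lemma isStochastic_mul {A B : Matrix (Fin n) (Fin n) ℝ} (hA : IsStochastic A)
    (hB : IsStochastic B) : IsStochastic (A * B) := by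
  constructor
  · intro i j
    rw [Matrix.mul_apply]
    exact Finset.sum_nonneg fun k _ => mul_nonneg (hA.1 i k) (hB.1 k j)
  · intro i
    simp only [Matrix.mul_apply]
    rw [Finset.sum_comm]
    calc ∑ k : Fin n, ∑ j : Fin n, A i k * B k j
        = ∑ k : Fin n, A i k * ∑ j : Fin n, B k j := by
          congr 1; funext k; rw [Finset.mul_sum]
      _ = 1 := by simp only [hB.2, mul_one, hA.2 i]


end Helpers

set_option maxHeartbeats 1200000 in
/-- Let p ∈ [1,∞] and let 𝒞 be a compact set of n×n stochastic
matrices with ⟨M⟩_p < 1 for each M ∈ 𝒞, and λ = max_{M ∈ 𝒞} ⟨M⟩_p. For every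
infinite sequence of matrices from 𝒞, the product M_i⋯M₁ converges to a rank-one
matrix 𝟏c as fast as λ^i → 0: there is K with ‖M_i⋯M₁ − 𝟏c‖ ≤ K·λ^i for all i ≥ 1. -/
theorem inducedSN_contraction_convergence (n : ℕ) (p : ℝ≥0∞) [Fact (1 ≤ p)]
    (C : Set (Matrix (Fin n) (Fin n) ℝ)) (hC : IsCompact C)
    (hstoch : ∀ M ∈ C, IsStochastic M)
    (hcontr : ∀ M ∈ C, inducedSN p M < 1) :
    ∀ Mseq : ℕ → Matrix (Fin n) (Fin n) ℝ, (∀ i, Mseq i ∈ C) →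
      ∃ c : Fin n → ℝ, ∃ K : ℝ,
        Filter.Tendsto
          (fun i => matPNorm p (prodSeq Mseq i - Matrix.of fun _ j => c j))
          Filter.atTop (nhds 0) ∧
        ∀ i : ℕ, 1 ≤ i →
          matPNorm p (prodSeq Mseq i - Matrix.of fun _ j => c j)
            ≤ K * (sSup ((fun M => inducedSN p M) '' C)) ^ i := by
  intro Mseq hMseq
  have hCstoch : ∀ i, ∀ k, ∑ j, Mseq i k j = 1 := fun i => (hstoch _ (hMseq i)).2
  set lam := sSup ((fun M => inducedSN p M) '' C) with hlam
  have hCsub : C ⊆ {M : Matrix (Fin n) (Fin n) ℝ | ∀ i, ∑ j, M i j = 1} :=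
    fun M hM => (hstoch M hM).2
  have himg : IsCompact ((fun M => inducedSN p M) '' C) :=
    hC.image_of_continuousOn ((inducedSN_continuousOn p).mono hCsub)
  have hne : ((fun M => inducedSN p M) '' C).Nonempty := ⟨_, ⟨Mseq 0, hMseq 0, rfl⟩⟩
  have hbdd := himg.bddAbove
  have hlam1 : lam < 1 := by
    obtain ⟨M, hM, hEq⟩ := himg.sSup_mem hne
    rw [hlam, ← hEq]
    exact hcontr M hM
  have hlam0 : 0 ≤ lam :=
    le_trans (inducedSN_nonneg p _ (hCstoch 0)) (le_csSup hbdd ⟨Mseq 0, hMseq 0, rfl⟩)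
  have hle : ∀ i, inducedSN p (Mseq i) ≤ lam := fun i => le_csSup hbdd ⟨Mseq i, hMseq i, rfl⟩
  have hPstoch : ∀ i, IsStochastic (prodSeq Mseq i) := by
    intro i
    induction i with
    | zero => exact isStochastic_one
    | succ i ih => exact isStochastic_mul (hstoch _ (hMseq i)) ih
  have key : ∀ (x : Fin n → ℝ) (i : ℕ),
      vecSN p ((prodSeq Mseq i).mulVec x) ≤ lam ^ i * vecSN p x := by
    intro x i
    induction i with
    | zero => simp [prodSeq, Matrix.one_mulVec]
    | succ i ih =>
      show vecSN p ((Mseq i * prodSeq Mseq i).mulVec x) ≤ _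
      rw [← Matrix.mulVec_mulVec]
      calc vecSN p ((Mseq i).mulVec ((prodSeq Mseq i).mulVec x))
          ≤ inducedSN p (Mseq i) * vecSN p ((prodSeq Mseq i).mulVec x) :=
            vecSN_mulVec_le_inducedSN p _ (hCstoch i) _
        _ ≤ lam * (lam ^ i * vecSN p x) :=
            mul_le_mul (hle i) ih (vecSN_nonneg p _) hlam0
        _ = lam ^ (i + 1) * vecSN p x := by ring
  rcases Nat.eq_zero_or_pos n with hn | hn
  · subst hn
    refine ⟨fun _ => 0, 0, ?_, ?_⟩
    · have hz : ∀ i, matPNorm p (prodSeq Mseq i - Matrix.of fun _ j => (0:ℝ)) = 0 := by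
        intro i
        have : (prodSeq Mseq i - Matrix.of fun _ j => (0:ℝ)) = 0 := by
          funext k j; exact k.elim0
        rw [this, matPNorm_zero]
      simp only [hz]
      exact tendsto_const_nhds
    · intro i _
      have : (prodSeq Mseq i - Matrix.of fun _ j => (0:ℝ)) = 0 := by
        funext k j; exact k.elim0
      rw [this, matPNorm_zero, zero_mul]
  · haveI : Nonempty (Fin n) := ⟨⟨0, hn⟩⟩
    set P := prodSeq Mseq with hP
    set a : ℕ → Fin n → ℝ :=
      fun i j => Finset.univ.sup' Finset.univ_nonempty (fun k => P i k j) with ha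
    set b : ℕ → Fin n → ℝ :=
      fun i j => Finset.univ.inf' Finset.univ_nonempty (fun k => P i k j) with hb
    have ha1 : ∀ i j k, P i k j ≤ a i j := by
      intro i j k
      simp only [ha]
      exact Finset.le_sup' (fun k => P i k j) (Finset.mem_univ k)
    have hb1 : ∀ i j k, b i j ≤ P i k j := by
      intro i j k
      simp only [hb]
      exact Finset.inf'_le (fun k => P i k j) (Finset.mem_univ k)
    have hstep : ∀ i k j, P (i+1) k j = ∑ l, Mseq i k l * P i l j := by
      intro i k j
      show (Mseq i * P i) k j = _
      rw [Matrix.mul_apply]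
    have ha_anti : ∀ j, Antitone fun i => a i j := by
      intro j
      refine antitone_nat_of_succ_le fun i => ?_
      refine Finset.sup'_le _ _ fun k _ => ?_
      calc P (i+1) k j = ∑ l, Mseq i k l * P i l j := hstep i k j
        _ ≤ ∑ l, Mseq i k l * a i j :=
            Finset.sum_le_sum fun l _ =>
              mul_le_mul_of_nonneg_left (ha1 i j l) ((hstoch _ (hMseq i)).1 k l)
        _ = a i j := by rw [← Finset.sum_mul, hCstoch i k, one_mul]
    have hb_mono : ∀ j, Monotone fun i => b i j := by
      intro j
      refine monotone_nat_of_le_succ fun i => ?_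
      refine Finset.le_inf' _ _ fun k _ => ?_
      calc b i j = ∑ l, Mseq i k l * b i j := by rw [← Finset.sum_mul, hCstoch i k, one_mul]
        _ ≤ ∑ l, Mseq i k l * P i l j :=
            Finset.sum_le_sum fun l _ =>
              mul_le_mul_of_nonneg_left (hb1 i j l) ((hstoch _ (hMseq i)).1 k l)
        _ = P (i+1) k j := (hstep i k j).symm
    have hba : ∀ i i' j, b i j ≤ a i' j := by
      intro i i' j
      have k0 : Fin n := Classical.arbitrary _
      calc b i j ≤ b (max i i') j := hb_mono j (le_max_left i i')
        _ ≤ P (max i i') k0 j := hb1 _ j k0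
        _ ≤ a (max i i') j := ha1 _ j k0
        _ ≤ a i' j := ha_anti j (le_max_right i i')
    set c : Fin n → ℝ := fun j => ⨅ i, a i j with hc
    have hbddB : ∀ j, BddBelow (Set.range fun i => a i j) := fun j =>
      ⟨b 0 j, by rintro r ⟨i, rfl⟩; exact hba 0 i j⟩
    have hca : ∀ i j, c j ≤ a i j := fun i j => ciInf_le (hbddB j) i
    have hbc : ∀ i j, b i j ≤ c j := fun i j => le_ciInf fun i' => hba i i' j
    have hcol : ∀ i j, (P i).mulVec (Pi.single j 1) = fun k => P i k j := by
      intro i j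
      funext k
      simp [Matrix.mulVec, dotProduct, Pi.single_apply]
    have osc : ∀ i j, a i j - b i j ≤ 2 * (lam ^ i * vecSN p (Pi.single j 1)) := by
      intro i j
      have h2 : vecSN p ((P i).mulVec (Pi.single j 1)) ≤ lam ^ i * vecSN p (Pi.single j 1) :=
        key (Pi.single j 1) i
      have h3 : a i j - b i j ≤ 2 * vecSN p ((P i).mulVec (Pi.single j 1)) := by
        refine le_mul_vecSN p (by norm_num) _ fun c0 => ?_
        obtain ⟨k, -, hk⟩ := Finset.exists_mem_eq_sup' (Finset.univ_nonempty)
          (fun k => P i k j)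
        obtain ⟨k', -, hk'⟩ := Finset.exists_mem_eq_inf' (Finset.univ_nonempty)
          (fun k => P i k j)
        have e1 : |(((P i).mulVec (Pi.single j 1) - fun _ => c0) : Fin n → ℝ) k|
            ≤ ‖(WithLp.equiv p (Fin n → ℝ)).symm ((P i).mulVec (Pi.single j 1) - fun _ => c0)‖ :=
          abs_coord_le_norm p _ k
        have e2 : |(((P i).mulVec (Pi.single j 1) - fun _ => c0) : Fin n → ℝ) k'|
            ≤ ‖(WithLp.equiv p (Fin n → ℝ)).symm ((P i).mulVec (Pi.single j 1) - fun _ => c0)‖ :=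
          abs_coord_le_norm p _ k'
        have e3 : (((P i).mulVec (Pi.single j 1) - fun _ => c0) : Fin n → ℝ) k = P i k j - c0 := by
          rw [hcol]; rfl
        have e4 : (((P i).mulVec (Pi.single j 1) - fun _ => c0) : Fin n → ℝ) k' = P i k' j - c0 := by
          rw [hcol]; rfl
        rw [e3] at e1
        rw [e4] at e2
        have := abs_le.mp e1
        have := abs_le.mp e2
        rw [ha, hb]
        simp only [← hk, ← hk']
        rw [hk, hk']
        cases abs_le.mp e1
        cases abs_le.mp e2
        linarith [abs_le.mp e1, abs_le.mp e2]
      calc a i j - b i j ≤ 2 * vecSN p ((P i).mulVec (Pi.single j 1)) := h3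
        _ ≤ 2 * (lam ^ i * vecSN p (Pi.single j 1)) := by linarith [h2]
    have entry : ∀ i k j, |P i k j - c j| ≤ 2 * (lam ^ i * vecSN p (Pi.single j 1)) := by
      intro i k j
      refine le_trans (abs_le.mpr ⟨?_, ?_⟩) (osc i j)
      · have := hb1 i j k
        have := hca i j
        linarith
      · have := ha1 i j k
        have := hbc i j
        linarith
    set K : ℝ := ∑ k : Fin n, ∑ j : Fin n,
      (2 * vecSN p (Pi.single j 1)) * matPNorm p (Matrix.single k j 1) with hK
    have bound : ∀ i, matPNorm p (P i - Matrix.of fun _ j => c j) ≤ K * lam ^ i := by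
      intro i
      calc matPNorm p (P i - Matrix.of fun _ j => c j)
          ≤ ∑ k : Fin n, ∑ j : Fin n,
              |((P i - Matrix.of fun _ j => c j) : Matrix (Fin n) (Fin n) ℝ) k j| * matPNorm p (Matrix.single k j 1) :=
            matPNorm_le_sum_entries p _
        _ ≤ ∑ k : Fin n, ∑ j : Fin n,
              (2 * (lam ^ i * vecSN p (Pi.single j 1))) * matPNorm p (Matrix.single k j 1) := by
            refine Finset.sum_le_sum fun k _ => Finset.sum_le_sum fun j _ => ?_
            refine mul_le_mul_of_nonneg_right ?_ (matPNorm_nonneg p _)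
            have he : ((P i - Matrix.of fun _ j => c j) : Matrix (Fin n) (Fin n) ℝ) k j = P i k j - c j := rfl
            rw [he]
            exact entry i k j
        _ = K * lam ^ i := by
            rw [hK, Finset.sum_mul]
            congr 1
            funext k
            rw [Finset.sum_mul]
            congr 1
            funext j
            ring
    refine ⟨c, K, ?_, fun i _ => bound i⟩
    have hK0 : Filter.Tendsto (fun i : ℕ => K * lam ^ i) Filter.atTop (nhds 0) := by
      have := (tendsto_pow_atTop_nhds_zero_of_lt_one hlam0 hlam1).const_mul K
      rwa [mul_zero] at this
    exact squeeze_zero (fun i => matPNorm_nonneg p _) bound hK0
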